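/- Let σ ≥ 0 and suppose there exists a nonempty set S ⊆ V with ∑_{i=1}^r m(S, G_i) ≥ σ|S|; let γ* = min{ Δ(S, 𝒢) : S ⊆ V nonempty, ∑_{i=1}^r m(S, G_i) ≥ σ|S| }. If 0 < ε ≤ 1/n³, 0 ≤ L ≤ γ* < U, U − L ≤ εL, and S₀ minimizes S ↦ b(S, 𝒢) − U|S| over all S ⊆ V with ∑_{i=1}^r m(S, G_i) ≥ σ|S|, then Δ(S₀, 𝒢) = γ*. -/
import Mathlib


/-- Number of edges of `G` with both endpoints in `S`. -/
noncomputable def edgeCnt {V : Type*} (G : SimpleGraph V) (S : Finset V) : ℕ :=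
  {e ∈ G.edgeSet | ∀ v ∈ e, v ∈ S}.ncard

/-- Density of the subgraph induced by `S` in `G`. -/
noncomputable def dens {V : Type*} (G : SimpleGraph V) (S : Finset V) : ℝ :=
  (edgeCnt G S : ℝ) / (S.card : ℝ)

/-- Total density across the graph snapshots. -/
noncomputable def densTot {V : Type*} {r : ℕ} (G : Fin r → SimpleGraph V) (S : Finset V) : ℝ :=
  ∑ i, dens (G i) S

/-- Difference between the maximum and minimum induced density. -/
noncomputable def densDiff {V : Type*} {r : ℕ} (G : Fin r → SimpleGraph V) (S : Finset V) : ℝ :=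
  (⨆ i, dens (G i) S) - (⨅ i, dens (G i) S)

/-- Difference between the maximum and minimum induced edge count. -/
noncomputable def edgeDiff {V : Type*} {r : ℕ} (G : Fin r → SimpleGraph V) (S : Finset V) : ℝ :=
  (⨆ i, (edgeCnt (G i) S : ℝ)) - (⨅ i, (edgeCnt (G i) S : ℝ))

lemma edgeCnt_le {V : Type*} [Fintype V] (G : SimpleGraph V) (S : Finset V) :
    edgeCnt G S ≤ (Fintype.card V) ^ 2 := by
  have h1 : edgeCnt G S ≤ (Set.univ : Set (Sym2 V)).ncard :=
    Set.ncard_le_ncard (Set.subset_univ _) Set.finite_univ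
  rw [Set.ncard_univ, Nat.card_eq_fintype_card, Sym2.card] at h1
  refine h1.trans ?_
  have := Nat.choose_two_right (Fintype.card V + 1)
  rw [this]
  set n := Fintype.card V
  have : (n + 1) * (n + 1 - 1) ≤ n ^ 2 * 2 := by
    simp only [Nat.add_sub_cancel]
    rcases n with _ | m
    · simp
    · nlinarith
  exact Nat.div_le_of_le_mul (by simpa [Nat.mul_comm] using this)

lemma edgeCnt_empty {V : Type*} (G : SimpleGraph V) : edgeCnt G ∅ = 0 := by
  have : {e ∈ G.edgeSet | ∀ v ∈ e, v ∈ (∅ : Finset V)} = ∅ := by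
    ext e
    induction e using Sym2.ind with
    | _ x y =>
      simp only [Set.mem_setOf_eq, Set.mem_empty_iff_false, iff_false, not_and]
      intro _ h
      exact absurd (h x (Sym2.mem_mk_left x y)) (by simp)
  rw [edgeCnt, this, Set.ncard_empty]

lemma edgeDiff_empty {V : Type*} {r : ℕ} (hr : 1 ≤ r) (G : Fin r → SimpleGraph V) :
    edgeDiff G ∅ = 0 := by
  haveI : Nonempty (Fin r) := Fin.pos_iff_nonempty.mp hr
  simp [edgeDiff, edgeCnt_empty]

lemma key {V : Type*} [Fintype V] {r : ℕ} (hr : 1 ≤ r) (G : Fin r → SimpleGraph V)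
    (S : Finset V) (hS : S.Nonempty) :
    ∃ a : ℕ, (∃ i, a ≤ edgeCnt (G i) S) ∧ edgeDiff G S = (a : ℝ) ∧
      densDiff G S = (a : ℝ) / (S.card : ℝ) := by
  haveI : Nonempty (Fin r) := Fin.pos_iff_nonempty.mp hr
  obtain ⟨j, hj⟩ := Finite.exists_max (fun i => edgeCnt (G i) S)
  obtain ⟨k, hk⟩ := Finite.exists_min (fun i => edgeCnt (G i) S)
  have hc : (0 : ℝ) < (S.card : ℝ) := by exact_mod_cast hS.card_pos
  have hsupE : (⨆ i, (edgeCnt (G i) S : ℝ)) = (edgeCnt (G j) S : ℝ) :=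
    le_antisymm (ciSup_le fun i => Nat.cast_le.mpr (hj i))
      (le_ciSup (f := fun i => (edgeCnt (G i) S : ℝ)) (Set.finite_range _).bddAbove j)
  have hinfE : (⨅ i, (edgeCnt (G i) S : ℝ)) = (edgeCnt (G k) S : ℝ) :=
    le_antisymm (ciInf_le (f := fun i => (edgeCnt (G i) S : ℝ)) (Set.finite_range _).bddBelow k)
      (le_ciInf fun i => Nat.cast_le.mpr (hk i))
  have hsupD : (⨆ i, dens (G i) S) = (edgeCnt (G j) S : ℝ) / (S.card : ℝ) :=
    le_antisymm (ciSup_le fun i => by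
        unfold dens; gcongr; exact_mod_cast hj i)
      (le_ciSup (f := fun i => dens (G i) S) (Set.finite_range _).bddAbove j)
  have hinfD : (⨅ i, dens (G i) S) = (edgeCnt (G k) S : ℝ) / (S.card : ℝ) :=
    le_antisymm (ciInf_le (f := fun i => dens (G i) S) (Set.finite_range _).bddBelow k)
      (le_ciInf fun i => by unfold dens; gcongr; exact_mod_cast hk i)
  refine ⟨edgeCnt (G j) S - edgeCnt (G k) S, ?_, ?_, ?_⟩
  · exact ⟨j, Nat.sub_le _ _⟩
  · rw [edgeDiff, hsupE, hinfE, Nat.cast_sub (hk j)]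
  · rw [densDiff, hsupD, hinfD, Nat.cast_sub (hk j), sub_div]

set_option maxHeartbeats 1000000 in
theorem stmt9 {V : Type*} [Fintype V] {r : ℕ} (hr : 1 ≤ r)
    (G : Fin r → SimpleGraph V) (σ ε L U γstar : ℝ) (hσ : 0 ≤ σ)
    (hε0 : 0 < ε) (hε : ε ≤ 1 / (Fintype.card V : ℝ) ^ 3)
    (hex : ∃ S : Finset V, S.Nonempty ∧ σ * (S.card : ℝ) ≤ ∑ i, (edgeCnt (G i) S : ℝ))
    (hstar : IsLeast
      {x : ℝ | ∃ S : Finset V, S.Nonempty ∧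
        σ * (S.card : ℝ) ≤ (∑ i, (edgeCnt (G i) S : ℝ)) ∧ densDiff G S = x}
      γstar)
    (hL0 : 0 ≤ L) (hLγ : L ≤ γstar) (hγU : γstar < U) (hUL : U - L ≤ ε * L)
    (S₀ : Finset V) (hfeas : σ * (S₀.card : ℝ) ≤ ∑ i, (edgeCnt (G i) S₀ : ℝ))
    (hmin : ∀ S : Finset V, σ * (S.card : ℝ) ≤ (∑ i, (edgeCnt (G i) S : ℝ)) →
      edgeDiff G S₀ - U * (S₀.card : ℝ) ≤ edgeDiff G S - U * (S.card : ℝ)) :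
    densDiff G S₀ = γstar := by
  obtain ⟨⟨Sstar, hSne, hSfeas, hSdd⟩, hlb⟩ := hstar
  have hn1 : (1 : ℝ) ≤ (Fintype.card V : ℝ) := by
    have : 0 < Fintype.card V := Fintype.card_pos_iff.mpr ⟨hSne.choose⟩
    exact_mod_cast this
  have hεn : ε * (Fintype.card V : ℝ) ^ 3 ≤ 1 := by
    rw [← le_div_iff₀ (by positivity)]; exact hε
  obtain ⟨a, ⟨ja, hja⟩, haE, haD⟩ := key hr G Sstar hSne
  have hp : (0 : ℝ) < (Sstar.card : ℝ) := by exact_mod_cast hSne.card_pos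
  have hp1 : (1 : ℝ) ≤ (Sstar.card : ℝ) := by exact_mod_cast hSne.card_pos
  have hpn : (Sstar.card : ℝ) ≤ (Fintype.card V : ℝ) := by
    exact_mod_cast Finset.card_le_univ Sstar
  have han : (a : ℝ) ≤ (Fintype.card V : ℝ) ^ 2 := by
    exact_mod_cast hja.trans (edgeCnt_le _ _)
  have haγ : (a : ℝ) = γstar * (Sstar.card : ℝ) := by
    rw [haD] at hSdd
    field_simp at hSdd
    linarith [hSdd]
  have e1 : (a : ℝ) * (S₀.card : ℝ) = γstar * (Sstar.card : ℝ) * (S₀.card : ℝ) := by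
    rw [haγ]
  have e2 : (a : ℝ) * (Sstar.card : ℝ) = γstar * (Sstar.card : ℝ) * (Sstar.card : ℝ) := by
    rw [haγ]
  have hmin' := hmin Sstar hSfeas
  rw [haE] at hmin'
  have hne0 : S₀.Nonempty := by
    rw [Finset.nonempty_iff_ne_empty]
    intro h
    rw [h, edgeDiff_empty hr] at hmin'
    simp only [Finset.card_empty, Nat.cast_zero, mul_zero, sub_zero] at hmin'
    nlinarith [haγ, mul_lt_mul_of_pos_right hγU hp]
  obtain ⟨b, ⟨jb, hjb⟩, hbE, hbD⟩ := key hr G S₀ hne0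
  have hq : (0 : ℝ) < (S₀.card : ℝ) := by exact_mod_cast hne0.card_pos
  have hqn : (S₀.card : ℝ) ≤ (Fintype.card V : ℝ) := by
    exact_mod_cast Finset.card_le_univ S₀
  rw [hbE] at hmin'
  have hlow : γstar ≤ densDiff G S₀ := hlb ⟨S₀, hne0, hfeas, rfl⟩
  rw [hbD] at hlow ⊢
  by_contra hcon
  have hgt : γstar < (b : ℝ) / (S₀.card : ℝ) := lt_of_le_of_ne hlow (Ne.symm hcon)
  -- integrality gap: a * q + 1 ≤ b * p
  have hint : (a : ℝ) * (S₀.card : ℝ) + 1 ≤ (b : ℝ) * (Sstar.card : ℝ) := by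
    rw [lt_div_iff₀ hq] at hgt
    have h1 : (a : ℝ) * (S₀.card : ℝ) < (b : ℝ) * (Sstar.card : ℝ) := by
      have := mul_lt_mul_of_pos_right hgt hp
      linarith [e1]
    have h2 : a * S₀.card < b * Sstar.card := by exact_mod_cast h1
    have h3 : a * S₀.card + 1 ≤ b * Sstar.card := h2
    exact_mod_cast h3
  have hub : (b : ℝ) ≤ (a : ℝ) + U * ((S₀.card : ℝ) - (Sstar.card : ℝ)) := by linarith
  have hub' : (b : ℝ) * (Sstar.card : ℝ)
      ≤ ((a : ℝ) + U * ((S₀.card : ℝ) - (Sstar.card : ℝ))) * (Sstar.card : ℝ) :=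
    mul_le_mul_of_nonneg_right hub hp.le
  have h4 : 1 ≤ ((S₀.card : ℝ) - (Sstar.card : ℝ)) * (U - γstar) * (Sstar.card : ℝ) := by
    linarith [hint, hub', e1, e2]
  have hqp : (0 : ℝ) < (S₀.card : ℝ) - (Sstar.card : ℝ) := by
    nlinarith [h4, mul_pos (sub_pos.mpr hγU) hp]
  have hγ0 : 0 ≤ γstar := le_trans hL0 hLγ
  have hUγ : U - γstar ≤ ε * γstar := by
    have := mul_le_mul_of_nonneg_left hLγ hε0.le
    linarith
  have h5a := mul_le_mul_of_nonneg_right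
    (mul_le_mul_of_nonneg_left hUγ hqp.le) hp.le
  have h5b : ((S₀.card : ℝ) - (Sstar.card : ℝ)) * (ε * γstar) * (Sstar.card : ℝ)
      = ε * ((S₀.card : ℝ) - (Sstar.card : ℝ)) * (a : ℝ) := by
    rw [haγ]; ring
  have h6 : ε * ((S₀.card : ℝ) - (Sstar.card : ℝ)) * (a : ℝ)
      ≤ ε * ((Fintype.card V : ℝ) - 1) * (Fintype.card V : ℝ) ^ 2 := by
    have ha0 : (0 : ℝ) ≤ (a : ℝ) := Nat.cast_nonneg a
    have hd : (S₀.card : ℝ) - (Sstar.card : ℝ) ≤ (Fintype.card V : ℝ) - 1 := by linarith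
    have := mul_le_mul (mul_le_mul_of_nonneg_left hd hε0.le) han ha0
      (mul_nonneg hε0.le (by linarith))
    linarith [this]
  have h7 : ε * ((Fintype.card V : ℝ) - 1) * (Fintype.card V : ℝ) ^ 2 < 1 := by
    have hεn2 : 0 < ε * (Fintype.card V : ℝ) ^ 2 := by positivity
    linarith [hεn, hεn2]
  linarith [h4, h5a, h5b, h6, h7]
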